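/- arXiv:1806.07587 — 3 statements merged into one kernel-verified Lean document; each statement's English description precedes it below -/
import Mathlib

section
/- Let r ∈ {1, 3} and let a be a positive integer with r·a ≥ 3. Suppose x, y, z are rational numbers satisfying the three equations: (r⁴a³ − 3r³a² + 3r²a − r)·x − (3r²a³ − 6ra² + 3a)·y + a³·z = 2, (r³a⁴ − 4r²a³ + 6ra² − 4a)·x + (4a³ − 2ra⁴)·y = 0, and x − (r²a⁴ − 4ra³ + 6a²)·y + a⁴·z = 0. Then x = 4a/(ra − 2)², y = (2r²a² − 4ra + 4)/(a(ra − 2)²), and z = (2r⁴a⁴ − 12r³a³ + 32r²a² − 40ra + 20)/(a³(ra − 2)²). -/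
/-- Solution of the linear system in the quadric bundle case (Section 5). -/
theorem stmt_3 (r a : ℤ) (hr : r = 1 ∨ r = 3) (ha : 0 < a) (hra : 3 ≤ r * a)
    (x y z : ℚ)
    (h1 : ((r : ℚ) ^ 4 * (a : ℚ) ^ 3 - 3 * (r : ℚ) ^ 3 * (a : ℚ) ^ 2
        + 3 * (r : ℚ) ^ 2 * (a : ℚ) - (r : ℚ)) * x
        - (3 * (r : ℚ) ^ 2 * (a : ℚ) ^ 3 - 6 * (r : ℚ) * (a : ℚ) ^ 2 + 3 * (a : ℚ)) * y
        + (a : ℚ) ^ 3 * z = 2)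
    (h2 : ((r : ℚ) ^ 3 * (a : ℚ) ^ 4 - 4 * (r : ℚ) ^ 2 * (a : ℚ) ^ 3
        + 6 * (r : ℚ) * (a : ℚ) ^ 2 - 4 * (a : ℚ)) * x
        + (4 * (a : ℚ) ^ 3 - 2 * (r : ℚ) * (a : ℚ) ^ 4) * y = 0)
    (h3 : x - ((r : ℚ) ^ 2 * (a : ℚ) ^ 4 - 4 * (r : ℚ) * (a : ℚ) ^ 3
        + 6 * (a : ℚ) ^ 2) * y + (a : ℚ) ^ 4 * z = 0) :
    x = 4 * (a : ℚ) / ((r : ℚ) * (a : ℚ) - 2) ^ 2 ∧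
    y = (2 * (r : ℚ) ^ 2 * (a : ℚ) ^ 2 - 4 * (r : ℚ) * (a : ℚ) + 4) /
        ((a : ℚ) * ((r : ℚ) * (a : ℚ) - 2) ^ 2) ∧
    z = (2 * (r : ℚ) ^ 4 * (a : ℚ) ^ 4 - 12 * (r : ℚ) ^ 3 * (a : ℚ) ^ 3
        + 32 * (r : ℚ) ^ 2 * (a : ℚ) ^ 2 - 40 * (r : ℚ) * (a : ℚ) + 20) /
        ((a : ℚ) ^ 3 * ((r : ℚ) * (a : ℚ) - 2) ^ 2) := by
  set R : ℚ := (r : ℚ) with hR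
  set A : ℚ := (a : ℚ) with hA
  have hA0 : A ≠ 0 := by
    simp only [hA]
    exact_mod_cast ha.ne'
  have hRA : (3 : ℚ) ≤ R * A := by
    simp only [hR, hA]
    exact_mod_cast hra
  have hden : R * A - 2 ≠ 0 := by nlinarith
  have hden2 : (R * A - 2) ^ 2 ≠ 0 := pow_ne_zero _ hden
  have hx : (-(A ^ 6) * (R * A - 2) ^ 3) * x = -4 * A ^ 7 * (R * A - 2) := by
    linear_combination ((-2)*R*A^8 + 4*A^7) * h1
      + (2*R^2*A^7 + (-2)*R*A^6 + (-3)*A^5) * h2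
      + (2*R*A^7 + (-4)*A^6) * h3
  have hy : (-(A ^ 6) * (R * A - 2) ^ 3) * y
      = (2 * R ^ 2 * A ^ 2 - 4 * R * A + 4) * (-(A ^ 5) * (R * A - 2)) := by
    linear_combination (-(R^3)*A^8 + 4*R^2*A^7 + (-6)*R*A^6 + 4*A^5) * h1
      + (R^4*A^7 + (-3)*R^3*A^6 + 3*R^2*A^5 + (-1)*R*A^4 + (-1)*A^3) * h2
      + (R^3*A^7 + (-4)*R^2*A^6 + 6*R*A^5 + (-4)*A^4) * h3
  have hz : (-(A ^ 6) * (R * A - 2) ^ 3) * z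
      = (2*R^4*A^4 - 12*R^3*A^3 + 32*R^2*A^2 - 40*R*A + 20) * (-(A ^ 3) * (R * A - 2)) := by
    linear_combination (-(R^5)*A^8 + 8*R^4*A^7 + (-28)*R^3*A^6 + 52*R^2*A^5 + (-50)*R*A^4 + 20*A^3) * h1
      + (R^6*A^7 + (-7)*R^5*A^6 + 21*R^4*A^5 + (-31)*R^3*A^4 + 19*R^2*A^3 + (-3)*A) * h2
      + (R^5*A^7 + (-8)*R^4*A^6 + 27*R^3*A^5 + (-46)*R^2*A^4 + 38*R*A^3 + (-12)*A^2) * h3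
  have hc : ∀ n : ℕ, (-(A ^ n) * (R * A - 2) : ℚ) ≠ 0 := fun n =>
    mul_ne_zero (neg_ne_zero.mpr (pow_ne_zero _ hA0)) hden
  refine ⟨?_, ?_, ?_⟩
  · rw [eq_div_iff hden2]
    apply mul_left_cancel₀ (hc 6)
    linear_combination hx
  · rw [eq_div_iff (mul_ne_zero hA0 hden2)]
    apply mul_left_cancel₀ (hc 5)
    linear_combination hy
  · rw [eq_div_iff (mul_ne_zero (pow_ne_zero _ hA0) hden2)]
    apply mul_left_cancel₀ (hc 3)
    linear_combination hz
end

section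
/- Set a = 3 and r = 1. Then there do not exist rational numbers x, y, z, u, v satisfying f₁ = 0, f₂ = 1/24, f₃ = 5/12, f₄ = 35/24 and f₅ = 25/12, where f₁ = ((a⁵r⁴ − 5a⁴r³ + 10a³r² − 10a²r + 5a)x − (3a⁵r² − 10a⁴r + 10a³)y + a⁵z)/120, f₂ = ((a⁴r⁴ − 4a³r³ + 6a²r² − 4ar + 1)x − (3a⁴r² − 8a³r + 6a²)y + a⁴z)/24, f₃ = (5a³r⁴ − 15a²r³ + 15ar² − 6r)x/72 − (5a³r² − 10a²r + 4a)y/24 + a³z/18 + (a³r² − 3a²r + 3a)u/72 − a³v/72, f₄ = ((a²r⁴ − 2ar³ + r²)x − (3a²r² − 4ar)y + (a²r² − 2ar + 1)u − a²v)/24, and f₅ = ar⁴x/180 − ar²y/60 − az/45 + (2ar² − 3r)u/72 − av/36 + a. -/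
/-- Half of Proposition 6.11: no solution for (a, r) = (3, 1). -/
theorem stmt_7 (a r : ℚ) (ha : a = 3) (hr : r = 1) :
    ¬ ∃ x y z u v : ℚ,
      ((a ^ 5 * r ^ 4 - 5 * a ^ 4 * r ^ 3 + 10 * a ^ 3 * r ^ 2 - 10 * a ^ 2 * r
          + 5 * a) * x - (3 * a ^ 5 * r ^ 2 - 10 * a ^ 4 * r + 10 * a ^ 3) * y
          + a ^ 5 * z) / 120 = 0 ∧
      ((a ^ 4 * r ^ 4 - 4 * a ^ 3 * r ^ 3 + 6 * a ^ 2 * r ^ 2 - 4 * a * r + 1) * x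
          - (3 * a ^ 4 * r ^ 2 - 8 * a ^ 3 * r + 6 * a ^ 2) * y
          + a ^ 4 * z) / 24 = 1 / 24 ∧
      (5 * a ^ 3 * r ^ 4 - 15 * a ^ 2 * r ^ 3 + 15 * a * r ^ 2 - 6 * r) * x / 72
          - (5 * a ^ 3 * r ^ 2 - 10 * a ^ 2 * r + 4 * a) * y / 24
          + a ^ 3 * z / 18
          + (a ^ 3 * r ^ 2 - 3 * a ^ 2 * r + 3 * a) * u / 72
          - a ^ 3 * v / 72 = 5 / 12 ∧
      ((a ^ 2 * r ^ 4 - 2 * a * r ^ 3 + r ^ 2) * x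
          - (3 * a ^ 2 * r ^ 2 - 4 * a * r) * y
          + (a ^ 2 * r ^ 2 - 2 * a * r + 1) * u - a ^ 2 * v) / 24 = 35 / 24 ∧
      a * r ^ 4 * x / 180 - a * r ^ 2 * y / 60 - a * z / 45
          + (2 * a * r ^ 2 - 3 * r) * u / 72 - a * v / 36 + a = 25 / 12 := by
  subst ha hr
  rintro ⟨x, y, z, u, v, h1, h2, h3, h4, h5⟩
  norm_num at h1 h2 h3 h4 h5
  linarith
end

section
/- Set a = 1 and r = 3. Then rational numbers x, y, z, u, v satisfy f₁ = 0, f₂ = 1/24, f₃ = 5/12, f₄ = 35/24 and f₅ = 25/12 if and only if y = (5x − 1)/2, z = (13x − 7)/2, u = 2x + 12, and v = (13x + 41)/2, where f₁ = ((a⁵r⁴ − 5a⁴r³ + 10a³r² − 10a²r + 5a)x − (3a⁵r² − 10a⁴r + 10a³)y + a⁵z)/120, f₂ = ((a⁴r⁴ − 4a³r³ + 6a²r² − 4ar + 1)x − (3a⁴r² − 8a³r + 6a²)y + a⁴z)/24, f₃ = (5a³r⁴ − 15a²r³ + 15ar² − 6r)x/72 − (5a³r² − 10a²r + 4a)y/24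 + a³z/18 + (a³r² − 3a²r + 3a)u/72 − a³v/72, f₄ = ((a²r⁴ − 2ar³ + r²)x − (3a²r² − 4ar)y + (a²r² − 2ar + 1)u − a²v)/24, and f₅ = ar⁴x/180 − ar²y/60 − az/45 + (2ar² − 3r)u/72 − av/36 + a. -/
/-- Half of Proposition 6.11: solving the linear system for (a, r) = (1, 3). -/
theorem stmt_8 (a r : ℚ) (ha : a = 1) (hr : r = 3) (x y z u v : ℚ) :
    (((a ^ 5 * r ^ 4 - 5 * a ^ 4 * r ^ 3 + 10 * a ^ 3 * r ^ 2 - 10 * a ^ 2 * r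
          + 5 * a) * x - (3 * a ^ 5 * r ^ 2 - 10 * a ^ 4 * r + 10 * a ^ 3) * y
          + a ^ 5 * z) / 120 = 0 ∧
      ((a ^ 4 * r ^ 4 - 4 * a ^ 3 * r ^ 3 + 6 * a ^ 2 * r ^ 2 - 4 * a * r + 1) * x
          - (3 * a ^ 4 * r ^ 2 - 8 * a ^ 3 * r + 6 * a ^ 2) * y
          + a ^ 4 * z) / 24 = 1 / 24 ∧
      (5 * a ^ 3 * r ^ 4 - 15 * a ^ 2 * r ^ 3 + 15 * a * r ^ 2 - 6 * r) * x / 72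
          - (5 * a ^ 3 * r ^ 2 - 10 * a ^ 2 * r + 4 * a) * y / 24
          + a ^ 3 * z / 18
          + (a ^ 3 * r ^ 2 - 3 * a ^ 2 * r + 3 * a) * u / 72
          - a ^ 3 * v / 72 = 5 / 12 ∧
      ((a ^ 2 * r ^ 4 - 2 * a * r ^ 3 + r ^ 2) * x
          - (3 * a ^ 2 * r ^ 2 - 4 * a * r) * y
          + (a ^ 2 * r ^ 2 - 2 * a * r + 1) * u - a ^ 2 * v) / 24 = 35 / 24 ∧
      a * r ^ 4 * x / 180 - a * r ^ 2 * y / 60 - a * z / 45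
          + (2 * a * r ^ 2 - 3 * r) * u / 72 - a * v / 36 + a = 25 / 12)
    ↔ (y = (5 * x - 1) / 2 ∧ z = (13 * x - 7) / 2 ∧ u = 2 * x + 12 ∧
        v = (13 * x + 41) / 2) := by
  subst ha hr
  constructor
  · rintro ⟨h1, h2, h3, h4, h5⟩
    refine ⟨by linarith, by linarith, by linarith, by linarith⟩
  · rintro ⟨hy, hz, hu, hv⟩
    subst hy hz hu hv
    refine ⟨by ring, by ring, by ring, by ring, by ring⟩
end
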